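/- There exists a constant C > 0, independent of x and q, such that for every x ∈ (0,∞) and every q ∈ ℝ³ with |q| ≥ 3 one has I₂^{(q)}(x) ≤ C x³/|q|⁴. (For |q| ≥ 3 only the second summand of I₂^{(q)} contributes, and on its domain |q|² − |q−p|² + |r'−p|² − |r'|² ≥ |q|² − 1 ≥ c|q|².) -/

import Mathlib

open MeasureTheory
open scoped ENNReal

noncomputable abbrev E3 := EuclideanSpace ℝ (Fin 3)

/-- The Belyakov-type integral `I₂^{(q)}(x)` of Lemma B.2, with the Dirac deltas
`δ(r-q)` and `δ(r+p-q)` evaluated explicitly. -/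
noncomputable def belyakovI2q (x : ℝ) (q : E3) : ℝ≥0∞ :=
  ∫⁻ p : E3,
    ({p : E3 | ‖q‖ < 1 ∧ 1 < ‖q + p‖}.indicator
      (fun p => ∫⁻ r' in {r' : E3 | ‖r'‖ < x ∧ x < ‖r' - p‖},
        ENNReal.ofReal (1 / (‖q + p‖ ^ 2 - ‖q‖ ^ 2 + ‖r' - p‖ ^ 2 - ‖r'‖ ^ 2) ^ 2)) p)
    +
    ({p : E3 | ‖q - p‖ < 1 ∧ 1 < ‖q‖}.indicator
      (fun p => ∫⁻ r' in {r' : E3 | ‖r'‖ < x ∧ x < ‖r' - p‖},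
        ENNReal.ofReal (1 / (‖q‖ ^ 2 - ‖q - p‖ ^ 2 + ‖r' - p‖ ^ 2 - ‖r'‖ ^ 2) ^ 2)) p)

/-- Upper bound `I₂^{(q)}(x) ≤ C x³/|q|⁴` for `|q| ≥ 3` and all `x > 0`. -/
theorem belyakovI2q_upper_bound_large_q :
    ∃ C : ℝ, 0 < C ∧ ∀ (x : ℝ) (q : E3), 0 < x → 3 ≤ ‖q‖ →
      belyakovI2q x q ≤ ENNReal.ofReal (C * x ^ 3 / ‖q‖ ^ 4) := by
  set c : ℝ := Real.sqrt Real.pi ^ 3 / Real.Gamma (3 / 2 + 1) with hc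
  have hcpos : 0 < c :=
    div_pos (pow_pos (Real.sqrt_pos.mpr Real.pi_pos) 3)
      (Real.Gamma_pos_of_pos (by norm_num))
  clear_value c
  refine ⟨81 / 64 * c ^ 2, by positivity, ?_⟩
  intro x q hx hq
  have hq0 : (0:ℝ) < ‖q‖ := by linarith
  have hq4 : (0:ℝ) < ‖q‖ ^ 4 := by positivity
  set K : ℝ≥0∞ := ENNReal.ofReal (81 / (64 * ‖q‖ ^ 4)) * volume (Metric.ball (0:E3) x)
    with hK
  have key : ∀ p : E3,
      ({p : E3 | ‖q‖ < 1 ∧ 1 < ‖q + p‖}.indicator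
        (fun p => ∫⁻ r' in {r' : E3 | ‖r'‖ < x ∧ x < ‖r' - p‖},
          ENNReal.ofReal (1 / (‖q + p‖ ^ 2 - ‖q‖ ^ 2 + ‖r' - p‖ ^ 2 - ‖r'‖ ^ 2) ^ 2)) p)
      +
      ({p : E3 | ‖q - p‖ < 1 ∧ 1 < ‖q‖}.indicator
        (fun p => ∫⁻ r' in {r' : E3 | ‖r'‖ < x ∧ x < ‖r' - p‖},
          ENNReal.ofReal (1 / (‖q‖ ^ 2 - ‖q - p‖ ^ 2 + ‖r' - p‖ ^ 2 - ‖r'‖ ^ 2) ^ 2)) p)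
      ≤ (Metric.ball q 1).indicator (fun _ => K) p := by
    intro p
    have h1 : ({p : E3 | ‖q‖ < 1 ∧ 1 < ‖q + p‖}.indicator
        (fun p => ∫⁻ r' in {r' : E3 | ‖r'‖ < x ∧ x < ‖r' - p‖},
          ENNReal.ofReal (1 / (‖q + p‖ ^ 2 - ‖q‖ ^ 2 + ‖r' - p‖ ^ 2 - ‖r'‖ ^ 2) ^ 2)) p) = 0 := by
      apply Set.indicator_of_notMem
      rintro ⟨h, -⟩
      linarith
    rw [h1, zero_add]
    by_cases hp : p ∈ {p : E3 | ‖q - p‖ < 1 ∧ 1 < ‖q‖}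
    · rw [Set.indicator_of_mem hp]
      obtain ⟨hp1, -⟩ := hp
      have hpball : p ∈ Metric.ball q 1 := by
        rw [Metric.mem_ball, dist_eq_norm, ← norm_sub_rev]
        exact hp1
      rw [Set.indicator_of_mem hpball]
      calc ∫⁻ r' in {r' : E3 | ‖r'‖ < x ∧ x < ‖r' - p‖},
            ENNReal.ofReal (1 / (‖q‖ ^ 2 - ‖q - p‖ ^ 2 + ‖r' - p‖ ^ 2 - ‖r'‖ ^ 2) ^ 2)
          ≤ ∫⁻ _ in {r' : E3 | ‖r'‖ < x ∧ x < ‖r' - p‖},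
            ENNReal.ofReal (81 / (64 * ‖q‖ ^ 4)) := by
            apply setLIntegral_mono measurable_const
            intro r' hr'
            obtain ⟨hr1, hr2⟩ := hr'
            apply ENNReal.ofReal_le_ofReal
            have hsq : ‖r'‖ ^ 2 ≤ ‖r' - p‖ ^ 2 := by
              have h0 : (0:ℝ) ≤ ‖r'‖ := norm_nonneg _
              nlinarith
            have hqp : ‖q - p‖ ^ 2 < 1 := by
              have h0 : (0:ℝ) ≤ ‖q - p‖ := norm_nonneg _
              nlinarith
            have hq9 : (9:ℝ) ≤ ‖q‖ ^ 2 := by nlinarith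
            have hD : (8/9) * ‖q‖ ^ 2 ≤ ‖q‖ ^ 2 - ‖q - p‖ ^ 2 + ‖r' - p‖ ^ 2 - ‖r'‖ ^ 2 := by
              nlinarith
            have hDpos : (0:ℝ) < ‖q‖ ^ 2 - ‖q - p‖ ^ 2 + ‖r' - p‖ ^ 2 - ‖r'‖ ^ 2 := by
              nlinarith
            rw [div_le_div_iff₀ (by positivity) (by positivity)]
            nlinarith
        _ = ENNReal.ofReal (81 / (64 * ‖q‖ ^ 4)) *
              volume {r' : E3 | ‖r'‖ < x ∧ x < ‖r' - p‖} := setLIntegral_const _ _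
        _ ≤ K := by
            rw [hK]
            gcongr
            intro r' hr'
            rw [Metric.mem_ball, dist_zero_right]
            exact hr'.1
    · rw [Set.indicator_of_notMem hp]
      exact zero_le
  calc belyakovI2q x q ≤ ∫⁻ p : E3, (Metric.ball q 1).indicator (fun _ => K) p :=
        lintegral_mono key
    _ = K * volume (Metric.ball q 1) := by
        rw [lintegral_indicator_const measurableSet_ball]
    _ ≤ ENNReal.ofReal (81 / 64 * c ^ 2 * x ^ 3 / ‖q‖ ^ 4) := by
        rw [hK, EuclideanSpace.volume_ball, EuclideanSpace.volume_ball]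
        simp only [Fintype.card_fin, ENNReal.ofReal_one, one_pow, one_mul]
        rw [← ENNReal.ofReal_pow hx.le,
          ← ENNReal.ofReal_mul (by positivity), ← ENNReal.ofReal_mul (by positivity),
          ← ENNReal.ofReal_mul (by positivity)]
        apply ENNReal.ofReal_le_ofReal
        apply le_of_eq
        rw [hc, show (3:ℝ)/2 + 1 = 5/2 by norm_num]
        have hΓ5 : Real.Gamma (5 / 2) ≠ 0 := (Real.Gamma_pos_of_pos (by norm_num)).ne'
        field_simp
        ring
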